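/- Gamma-convergence, lower bound: let N_j → ∞, Z_α^{(j)} > 0, Z^{(j)} = Σ_α Z_α^{(j)} → ∞, N_j/Z^{(j)} → λ ∈ (0,∞), and Z_α^{(j)}/Z^{(j)} → z_α. If μ_j, μ are nonnegative finite Radon measures on ℝ³∖Ω with μ_j ⇀* μ, then I_λ(μ) ≤ liminf_{j→∞} I^{(j)}(μ_j), where I^{(j)} is the rescaled discrete energy associated with (N_j, Z^{(j)}) and I_λ(μ) = I(μ) if μ(ℝ³∖Ω) ≤ λ and +∞ otherwise. -/

import Mathlib

open MeasureTheory Filter Topology Metric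
open scoped ENNReal NNReal Classical

set_option maxHeartbeats 2000000
noncomputable section

abbrev E3 : Type := EuclideanSpace ℝ (Fin 3)

/-- The molecular potential `v(x) = -∑_α Z_α / |x - R_α|`. -/
def molPot (M : ℕ) (R : Fin M → E3) (Zc : Fin M → ℝ) (x : E3) : ℝ :=
  ∑ α, -(Zc α) / dist x (R α)

/-- The particle energy `V_{N,Z}`. -/
def partEnergy (N M : ℕ) (R : Fin M → E3) (Zc : Fin M → ℝ) (x : Fin N → E3) : ℝ :=
  (∑ i, molPot M R Zc (x i)) + ∑ i, ∑ j, if i < j then (dist (x i) (x j))⁻¹ else 0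

/-- The admissible set `A_N`. -/
def adm (N M : ℕ) (R : Fin M → E3) (d : ℝ) : Set (Fin N → E3) :=
  {x | ∀ i α, d ≤ dist (x i) (R α)}

/-- `ℝ³ \ Ω`, the complement of the union of the open hard-core balls. -/
def hardCoreComp (M : ℕ) (R : Fin M → E3) (d : ℝ) : Set E3 :=
  {x | ∀ α, d ≤ dist x (R α)}

/-- `∫∫ 1/|x-y| dν dμ`. -/
def coulombPair (μ ν : Measure E3) : ℝ≥0∞ :=
  ∫⁻ x, ∫⁻ y, ENNReal.ofReal (dist x y)⁻¹ ∂ν ∂μ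

/-- Coulomb self energy `J(μ)`. -/
def selfEnergy (μ : Measure E3) : ℝ≥0∞ := (1 / 2) * coulombPair μ μ

/-- Electron-nuclei attraction term `∫ ∑_α z_α/|x - R_α| dμ`. -/
def attraction (M : ℕ) (R : Fin M → E3) (z : Fin M → ℝ) (μ : Measure E3) : ℝ :=
  ∫ x, ∑ α, z α / dist x (R α) ∂μ

/-- Continuum energy `I(μ)`, with values in `ℝ ∪ {+∞} ⊆ EReal`. -/
def contEnergy (M : ℕ) (R : Fin M → E3) (z : Fin M → ℝ) (μ : Measure E3) : EReal :=
  (selfEnergy μ : EReal) - ((attraction M R z μ : ℝ) : EReal)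

/-- `M_{[0,λ]}`: nonnegative measures supported on ℝ³∖Ω of mass at most λ. -/
def MemMle (M : ℕ) (R : Fin M → E3) (d lam : ℝ) (μ : Measure E3) : Prop :=
  μ (hardCoreComp M R d)ᶜ = 0 ∧ μ Set.univ ≤ ENNReal.ofReal lam

/-- `M_λ`: nonnegative measures supported on ℝ³∖Ω of mass exactly λ. -/
def MemMeq (M : ℕ) (R : Fin M → E3) (d lam : ℝ) (μ : Measure E3) : Prop :=
  μ (hardCoreComp M R d)ᶜ = 0 ∧ μ Set.univ = ENNReal.ofReal lam

/-- Off-diagonal Coulomb repulsion `(1/2)∫∫_{≠} 1/|x-y| dμ dμ`. -/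
def offDiagEnergy (μ : Measure E3) : ℝ≥0∞ :=
  (1 / 2) * ∫⁻ x, ∫⁻ y, (if x = y then 0 else ENNReal.ofReal (dist x y)⁻¹) ∂μ ∂μ

/-- The empirical measure `(1/Z) ∑ δ_{x_i}`. -/
def empirical (Z : ℝ) (N : ℕ) (x : Fin N → E3) : Measure E3 :=
  (ENNReal.ofReal Z)⁻¹ • ∑ i, Measure.dirac (x i)

/-- Rescaled discrete energy `I^{N,Z}(μ)`. -/
def discEnergy (M N : ℕ) (R : Fin M → E3) (Zc : Fin M → ℝ) (d : ℝ)
    (μ : Measure E3) : EReal :=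
  if ∃ x : Fin N → E3, Function.Injective x ∧ (∀ i, x i ∈ hardCoreComp M R d) ∧
      μ = empirical (∑ α, Zc α) N x
  then (offDiagEnergy μ : EReal)
    - ((attraction M R (fun α => Zc α / ∑ β, Zc β) μ : ℝ) : EReal)
  else ⊤

/-- Weak* convergence of measures, tested against continuous functions vanishing at infinity. -/
def weakStarTendsto (μs : ℕ → Measure E3) (μ : Measure E3) : Prop :=
  ∀ f : ZeroAtInftyContinuousMap E3 ℝ,
    Tendsto (fun j => ∫ x, f x ∂(μs j)) atTop (𝓝 (∫ x, f x ∂μ))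

/-- Package a compactly supported continuous function as a `ZeroAtInftyContinuousMap`. -/
def mkC0 (f : E3 → ℝ) (hc : Continuous f) (hs : HasCompactSupport f) :
    ZeroAtInftyContinuousMap E3 ℝ :=
  ⟨⟨f, hc⟩, hs.is_zero_at_infty⟩

@[simp] lemma mkC0_apply (f : E3 → ℝ) (hc hs) (x : E3) : mkC0 f hc hs x = f x := rfl

/-- Cutoff functions `φ_m`. -/
def cutoff (m : ℕ) (x : E3) : ℝ := min 1 (max 0 ((m : ℝ) - ‖x‖))

lemma cutoff_continuous (m : ℕ) : Continuous (cutoff m) := by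
  unfold cutoff
  exact continuous_const.min (continuous_const.max (continuous_const.sub continuous_norm))

lemma cutoff_nonneg (m : ℕ) (x : E3) : 0 ≤ cutoff m x := le_min zero_le_one (le_max_left _ _)

lemma cutoff_le_one (m : ℕ) (x : E3) : cutoff m x ≤ 1 := min_le_left _ _

lemma cutoff_mono (x : E3) : Monotone fun m : ℕ => cutoff m x := by
  intro a b hab
  exact min_le_min le_rfl (max_le_max le_rfl (by simp only [sub_le_sub_iff_right]; exact_mod_cast hab))

lemma cutoff_eq_one {m : ℕ} {x : E3} (h : ‖x‖ + 1 ≤ (m : ℝ)) : cutoff m x = 1 := by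
  have h1 : (1 : ℝ) ≤ (m : ℝ) - ‖x‖ := by linarith
  have : max 0 ((m : ℝ) - ‖x‖) = (m : ℝ) - ‖x‖ := max_eq_right (by linarith [norm_nonneg x])
  rw [cutoff, this, min_eq_left h1]

lemma cutoff_support (m : ℕ) : Function.support (cutoff m) ⊆ closedBall 0 m := by
  intro x hx
  simp only [Function.mem_support] at hx
  by_contra hB
  apply hx
  simp only [mem_closedBall, dist_zero_right, not_le] at hB
  have : max 0 ((m : ℝ) - ‖x‖) = 0 := max_eq_left (by linarith)
  simp [cutoff, this]

lemma cutoff_hcs (m : ℕ) : HasCompactSupport (cutoff m) := by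
  apply HasCompactSupport.of_support_subset_isCompact (isCompact_closedBall (0 : E3) m)
  exact cutoff_support m

/-- The truncated Coulomb kernel `g_n(x,y) = 1 / max(1/(n+1), |x-y|)`. -/
def gker (n : ℕ) (x y : E3) : ℝ := (max ((n : ℝ) + 1)⁻¹ (dist x y))⁻¹

lemma gker_pos_den (n : ℕ) (x y : E3) : 0 < max ((n : ℝ) + 1)⁻¹ (dist x y) :=
  lt_max_of_lt_left (by positivity)

lemma gker_nonneg (n : ℕ) (x y : E3) : 0 ≤ gker n x y := le_of_lt (by
  exact inv_pos.mpr (gker_pos_den n x y))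

lemma gker_le (n : ℕ) (x y : E3) : gker n x y ≤ (n : ℝ) + 1 := by
  rw [gker]
  rw [← one_div]
  rw [div_le_iff₀ (gker_pos_den n x y)]
  calc (1:ℝ) = ((n:ℝ)+1) * ((n:ℝ)+1)⁻¹ := by field_simp
  _ ≤ ((n:ℝ)+1) * max ((n : ℝ) + 1)⁻¹ (dist x y) := by
      apply mul_le_mul_of_nonneg_left (le_max_left _ _) (by positivity)

lemma gker_le_inv_dist {n : ℕ} {x y : E3} (hxy : x ≠ y) : gker n x y ≤ (dist x y)⁻¹ := by
  have hd : 0 < dist x y := dist_pos.mpr hxy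
  exact inv_anti₀ hd (le_max_right _ _)

lemma gker_continuous (n : ℕ) : Continuous fun p : E3 × E3 => gker n p.1 p.2 := by
  apply Continuous.inv₀
  · exact continuous_const.max (continuous_fst.dist continuous_snd)
  · intro p; exact ne_of_gt (gker_pos_den n p.1 p.2)

lemma gker_mono (x y : E3) : Monotone fun n : ℕ => gker n x y := by
  intro a b hab
  apply inv_anti₀ (gker_pos_den b x y)
  apply max_le_max _ le_rfl
  apply inv_anti₀ (by positivity)
  have : (a:ℝ) ≤ b := by exact_mod_cast hab
  linarith


lemma gker_eq_inv_dist {n : ℕ} {x y : E3} (h : ((n:ℝ)+1)⁻¹ ≤ dist x y) :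
    gker n x y = (dist x y)⁻¹ := by
  rw [gker, max_eq_right h]

lemma cutoff_zero {n : ℕ} {x : E3} (hx : x ∉ closedBall (0:E3) n) : cutoff n x = 0 := by
  by_contra h
  exact hx (cutoff_support n h)


/-- The doubly-truncated kernel. -/
def hker (n : ℕ) (x y : E3) : ℝ := gker n x y * (cutoff n x * cutoff n y)

lemma hker_nonneg (n : ℕ) (x y : E3) : 0 ≤ hker n x y := by
  exact mul_nonneg (gker_nonneg n x y) (mul_nonneg (cutoff_nonneg n x) (cutoff_nonneg n y))

lemma hker_le (n : ℕ) (x y : E3) : hker n x y ≤ (n : ℝ) + 1 := by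
  have h1 := cutoff_le_one n x
  have h2 := cutoff_le_one n y
  have h0x := cutoff_nonneg n x
  have h0y := cutoff_nonneg n y
  have hg := gker_le n x y
  have hg0 := gker_nonneg n x y
  calc hker n x y ≤ gker n x y * 1 := by
        apply mul_le_mul_of_nonneg_left _ hg0
        calc cutoff n x * cutoff n y ≤ 1 * 1 := mul_le_mul h1 h2 h0y zero_le_one
        _ = 1 := one_mul 1
  _ = gker n x y := mul_one _
  _ ≤ _ := hg

lemma hker_continuous (n : ℕ) : Continuous fun p : E3 × E3 => hker n p.1 p.2 := by
  exact (gker_continuous n).mul (((cutoff_continuous n).comp continuous_fst).mul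
    ((cutoff_continuous n).comp continuous_snd))

lemma hker_mono (x y : E3) : Monotone fun n : ℕ => ENNReal.ofReal (hker n x y) := by
  intro a b hab
  apply ENNReal.ofReal_le_ofReal
  apply mul_le_mul (gker_mono x y hab)
    (mul_le_mul (cutoff_mono x hab) (cutoff_mono y hab) (cutoff_nonneg _ _) (cutoff_nonneg _ _))
    (mul_nonneg (cutoff_nonneg _ _) (cutoff_nonneg _ _)) (gker_nonneg b x y)

/-- (K1) pointwise domination. -/
lemma hker_pointwise_le (n : ℕ) (x y : E3) :
    ENNReal.ofReal (hker n x y)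
      ≤ ENNReal.ofReal (dist x y)⁻¹ + Set.indicator {x} (fun _ => (n : ℝ≥0∞) + 1) y := by
  by_cases hxy : x = y
  · subst hxy
    simp only [Set.indicator_of_mem, Set.mem_singleton_iff]
    calc ENNReal.ofReal (hker n x x) ≤ ENNReal.ofReal ((n : ℝ) + 1) :=
          ENNReal.ofReal_le_ofReal (hker_le n x x)
    _ ≤ (n : ℝ≥0∞) + 1 := by
          rw [ENNReal.ofReal_add (by positivity) zero_le_one]
          simp [ENNReal.ofReal_natCast]
    _ ≤ _ := le_add_self
  · have h1 : hker n x y ≤ (dist x y)⁻¹ := by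
      have h1 := cutoff_le_one n x
      have h2 := cutoff_le_one n y
      have h0x := cutoff_nonneg n x
      have h0y := cutoff_nonneg n y
      have hg0 := gker_nonneg n x y
      calc hker n x y ≤ gker n x y * 1 := by
            apply mul_le_mul_of_nonneg_left _ hg0
            calc cutoff n x * cutoff n y ≤ 1 * 1 := mul_le_mul h1 h2 h0y zero_le_one
            _ = 1 := one_mul 1
      _ = gker n x y := mul_one _
      _ ≤ _ := gker_le_inv_dist hxy
    exact le_add_right (ENNReal.ofReal_le_ofReal h1)

/-- (K3) supremum recovers the Coulomb kernel. -/
lemma hker_sup (x y : E3) :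
    ENNReal.ofReal (dist x y)⁻¹ ≤ ⨆ n, ENNReal.ofReal (hker n x y) := by
  by_cases hxy : x = y
  · subst hxy; simp
  · have hd : 0 < dist x y := dist_pos.mpr hxy
    obtain ⟨n, hn⟩ : ∃ n : ℕ, max (‖x‖ + 1) (max (‖y‖ + 1) (dist x y)⁻¹) ≤ (n : ℝ) :=
      exists_nat_ge _
    refine le_trans ?_ (le_iSup _ n)
    have hx1 : cutoff n x = 1 := cutoff_eq_one (le_trans (le_max_left _ _) hn)
    have hy1 : cutoff n y = 1 :=
      cutoff_eq_one (le_trans (le_trans (le_max_left _ _) (le_max_right _ _)) hn)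
    have hg : gker n x y = (dist x y)⁻¹ := by
      apply gker_eq_inv_dist
      rw [inv_le_comm₀ (by positivity) hd]
      refine le_trans (le_trans (le_trans (le_max_right _ _) (le_max_right _ _)) hn) (by linarith)
    rw [hker, hx1, hy1, hg]
    simp

section helpers
variable (ν : Measure E3) [IsFiniteMeasure ν] (G : E3 → E3 → ℝ)
variable (hGc : Continuous fun p : E3 × E3 => G p.1 p.2)
variable (hG0 : ∀ x y, 0 ≤ G x y) (B : ℝ) (hGB : ∀ x y, G x y ≤ B)

include hGc hG0 hGB

lemma intG (x : E3) : Integrable (G x) ν := by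
  refine Integrable.mono' (integrable_const B) ?_ (Filter.Eventually.of_forall fun y => ?_)
  · exact (hGc.comp (Continuous.prodMk_right x)).aestronglyMeasurable
  · rw [Real.norm_eq_abs, abs_of_nonneg (hG0 x y)]; exact hGB x y

lemma contF : Continuous fun x => ∫ y, G x y ∂ν := by
  refine continuous_of_dominated (fun x => (hGc.comp (Continuous.prodMk_right x)).aestronglyMeasurable)
    (fun x => Filter.Eventually.of_forall fun y => ?_) (integrable_const B) ?_
  · rw [Real.norm_eq_abs, abs_of_nonneg (hG0 x y)]; exact hGB x y
  · exact Filter.Eventually.of_forall fun y => hGc.comp (continuous_id.prodMk continuous_const)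

lemma F_nonneg (x : E3) : 0 ≤ ∫ y, G x y ∂ν := integral_nonneg (hG0 x)

lemma F_le (x : E3) : ∫ y, G x y ∂ν ≤ B * (ν Set.univ).toReal := by
  have := norm_integral_le_of_norm_le_const (μ := ν) (f := G x) (C := B)
    (Filter.Eventually.of_forall fun y => by
      rw [Real.norm_eq_abs, abs_of_nonneg (hG0 x y)]; exact hGB x y)
  calc ∫ y, G x y ∂ν ≤ ‖∫ y, G x y ∂ν‖ := le_abs_self _
  _ ≤ _ := this

lemma intF : Integrable (fun x => ∫ y, G x y ∂ν) ν := by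
  refine Integrable.mono' (integrable_const (B * (ν Set.univ).toReal))
    (contF ν G hGc hG0 B hGB).aestronglyMeasurable
    (Filter.Eventually.of_forall fun x => ?_)
  rw [Real.norm_eq_abs, abs_of_nonneg (F_nonneg ν G hGc hG0 B hGB x)]
  exact F_le ν G hGc hG0 B hGB x

/-- Conversion of the iterated lintegral to an iterated Bochner integral. -/
lemma double_ofReal :
    ∫⁻ x, ∫⁻ y, ENNReal.ofReal (G x y) ∂ν ∂ν = ENNReal.ofReal (∫ x, (∫ y, G x y ∂ν) ∂ν) := by
  have hinner : ∀ x, ∫⁻ y, ENNReal.ofReal (G x y) ∂ν = ENNReal.ofReal (∫ y, G x y ∂ν) := by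
    intro x
    rw [← ofReal_integral_eq_lintegral_ofReal (intG ν G hGc hG0 B hGB x)
      (Filter.Eventually.of_forall (hG0 x))]
  calc ∫⁻ x, ∫⁻ y, ENNReal.ofReal (G x y) ∂ν ∂ν
      = ∫⁻ x, ENNReal.ofReal (∫ y, G x y ∂ν) ∂ν := by
        apply lintegral_congr hinner
  _ = ENNReal.ofReal (∫ x, (∫ y, G x y ∂ν) ∂ν) := by
        rw [← ofReal_integral_eq_lintegral_ofReal (intF ν G hGc hG0 B hGB)
          (Filter.Eventually.of_forall (F_nonneg ν G hGc hG0 B hGB))]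
end helpers

lemma meas_hker (n : ℕ) : Measurable fun p : E3 × E3 => ENNReal.ofReal (hker n p.1 p.2) :=
  (hker_continuous n).measurable.ennreal_ofReal

lemma meas_hker_right (n : ℕ) (x : E3) : Measurable fun y => ENNReal.ofReal (hker n x y) :=
  ((hker_continuous n).comp (Continuous.prodMk_right x)).measurable.ennreal_ofReal

lemma meas_dist : Measurable fun p : E3 × E3 => dist p.1 p.2 := measurable_dist
lemma meas_dist_inv : Measurable fun p : E3 × E3 => (dist p.1 p.2)⁻¹ := meas_dist.inv
lemma meas_coul : Measurable fun p : E3 × E3 => ENNReal.ofReal (dist p.1 p.2)⁻¹ :=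
  meas_dist_inv.ennreal_ofReal

lemma meas_dist_right (x : E3) : Measurable fun y : E3 => dist x y :=
  measurable_const.dist measurable_id
lemma meas_dist_inv_right (x : E3) : Measurable fun y : E3 => (dist x y)⁻¹ := (meas_dist_right x).inv
lemma meas_coul_right (x : E3) : Measurable fun y => ENNReal.ofReal (dist x y)⁻¹ :=
  (meas_dist_inv_right x).ennreal_ofReal

/-- (K4): the Coulomb double integral is dominated by the sup of truncated ones. -/
lemma coulomb_le_sup (μ : Measure E3) [IsFiniteMeasure μ] :
    (∫⁻ x, ∫⁻ y, ENNReal.ofReal (dist x y)⁻¹ ∂μ ∂μ)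
      ≤ ⨆ n, ∫⁻ x, ∫⁻ y, ENNReal.ofReal (hker n x y) ∂μ ∂μ := by
  have step1 : (∫⁻ x, ∫⁻ y, ENNReal.ofReal (dist x y)⁻¹ ∂μ ∂μ)
      ≤ ∫⁻ x, ∫⁻ y, ⨆ n, ENNReal.ofReal (hker n x y) ∂μ ∂μ :=
    lintegral_mono fun x => lintegral_mono fun y => hker_sup x y
  have step2 : ∀ x, ∫⁻ y, ⨆ n, ENNReal.ofReal (hker n x y) ∂μ
      = ⨆ n, ∫⁻ y, ENNReal.ofReal (hker n x y) ∂μ := by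
    intro x
    exact lintegral_iSup (fun n => meas_hker_right n x) (fun a b hab y => hker_mono x y hab)
  have step3 : (∫⁻ x, ⨆ n, ∫⁻ y, ENNReal.ofReal (hker n x y) ∂μ ∂μ)
      = ⨆ n, ∫⁻ x, ∫⁻ y, ENNReal.ofReal (hker n x y) ∂μ ∂μ := by
    apply lintegral_iSup
    · exact fun n => (meas_hker n).lintegral_prod_right'
    · exact fun a b hab x => lintegral_mono fun y => hker_mono x y hab
  calc _ ≤ _ := step1
  _ = ∫⁻ x, ⨆ n, ∫⁻ y, ENNReal.ofReal (hker n x y) ∂μ ∂μ := lintegral_congr step2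
  _ = _ := step3

/-- (K5): truncated double integral vs Coulomb plus diagonal. -/
lemma hker_double_le (ν : Measure E3) [SFinite ν] (n : ℕ) :
    ∫⁻ x, ∫⁻ y, ENNReal.ofReal (hker n x y) ∂ν ∂ν
      ≤ (∫⁻ x, ∫⁻ y, ENNReal.ofReal (dist x y)⁻¹ ∂ν ∂ν)
        + ((n : ℝ≥0∞) + 1) * ∫⁻ x, ν {x} ∂ν := by
  have hinner : ∀ x, ∫⁻ y, ENNReal.ofReal (hker n x y) ∂ν
      ≤ (∫⁻ y, ENNReal.ofReal (dist x y)⁻¹ ∂ν) + ((n : ℝ≥0∞) + 1) * ν {x} := by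
    intro x
    calc ∫⁻ y, ENNReal.ofReal (hker n x y) ∂ν
        ≤ ∫⁻ y, (ENNReal.ofReal (dist x y)⁻¹
            + Set.indicator {x} (fun _ => (n : ℝ≥0∞) + 1) y) ∂ν :=
          lintegral_mono fun y => hker_pointwise_le n x y
    _ = (∫⁻ y, ENNReal.ofReal (dist x y)⁻¹ ∂ν)
          + ∫⁻ y, Set.indicator {x} (fun _ => (n : ℝ≥0∞) + 1) y ∂ν :=
          lintegral_add_left (meas_coul_right x) _
    _ = (∫⁻ y, ENNReal.ofReal (dist x y)⁻¹ ∂ν) + ((n : ℝ≥0∞) + 1) * ν {x} := by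
          rw [lintegral_indicator (measurableSet_singleton x), setLIntegral_const]
  calc ∫⁻ x, ∫⁻ y, ENNReal.ofReal (hker n x y) ∂ν ∂ν
      ≤ ∫⁻ x, ((∫⁻ y, ENNReal.ofReal (dist x y)⁻¹ ∂ν) + ((n : ℝ≥0∞) + 1) * ν {x}) ∂ν :=
        lintegral_mono hinner
  _ = (∫⁻ x, ∫⁻ y, ENNReal.ofReal (dist x y)⁻¹ ∂ν ∂ν)
        + ∫⁻ x, ((n : ℝ≥0∞) + 1) * ν {x} ∂ν := lintegral_add_left meas_coul.lintegral_prod_right' _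
  _ = _ := by rw [lintegral_const_mul']; exact ENNReal.add_ne_top.mpr ⟨ENNReal.natCast_ne_top n, ENNReal.one_ne_top⟩

/-- Key convergence of double integrals under vague convergence with mass bounds. -/
lemma key_conv (ν : ℕ → Measure E3) (μ : Measure E3) [IsFiniteMeasure μ]
    (hfin : ∀ j, IsFiniteMeasure (ν j))
    (Cr : ℝ) (hCr : 0 ≤ Cr) (hmass : ∀ j, ((ν j) Set.univ).toReal ≤ Cr)
    (hμmass : (μ Set.univ).toReal ≤ Cr)
    (hw : ∀ f : ZeroAtInftyContinuousMap E3 ℝ,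
      Tendsto (fun j => ∫ x, f x ∂(ν j)) atTop (𝓝 (∫ x, f x ∂μ)))
    (G : E3 → E3 → ℝ) (hGc : Continuous fun p : E3 × E3 => G p.1 p.2)
    (hG0 : ∀ x y, 0 ≤ G x y) (B : ℝ) (hGB : ∀ x y, G x y ≤ B)
    (K : Set E3) (hK : IsCompact K)
    (hKx : ∀ x y, x ∉ K → G x y = 0) (hKy : ∀ x y, y ∉ K → G x y = 0) :
    Tendsto (fun j => ∫ x, (∫ y, G x y ∂(ν j)) ∂(ν j)) atTop
      (𝓝 (∫ x, (∫ y, G x y ∂μ) ∂μ)) := by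
  haveI : ∀ j, IsFiniteMeasure (ν j) := hfin
  -- compact support of the pair function
  have hGhcs : HasCompactSupport fun p : E3 × E3 => G p.1 p.2 := by
    apply HasCompactSupport.of_support_subset_isCompact (hK.prod hK)
    intro p hp
    simp only [Function.mem_support] at hp
    constructor
    · by_contra h; exact hp (hKx _ _ h)
    · by_contra h; exact hp (hKy _ _ h)
  have hUC : UniformContinuous fun p : E3 × E3 => G p.1 p.2 :=
    hGhcs.uniformContinuous_of_continuous hGc
  -- the limiting inner integral, as a C0 function
  have hFμc : Continuous fun x => ∫ y, G x y ∂μ := contF μ G hGc hG0 B hGB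
  have hFμ0 : ∀ x, x ∉ K → (∫ y, G x y ∂μ) = 0 := by
    intro x hx
    have : (fun y => G x y) = fun _ => 0 := funext fun y => hKx x y hx
    rw [this, integral_zero]
  have hFμhcs : HasCompactSupport fun x => ∫ y, G x y ∂μ := by
    apply HasCompactSupport.of_support_subset_isCompact hK
    intro x hx
    simp only [Function.mem_support] at hx
    by_contra h; exact hx (hFμ0 x h)
  -- pointwise convergence of inner integrals
  have hGyc : ∀ x : E3, Continuous fun y => G x y := fun x => hGc.comp (Continuous.prodMk_right x)
  have hGyhcs : ∀ x : E3, HasCompactSupport fun y => G x y := by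
    intro x
    apply HasCompactSupport.of_support_subset_isCompact hK
    intro y hy
    simp only [Function.mem_support] at hy
    by_contra h; exact hy (hKy x y h)
  have hFj : ∀ x : E3, Tendsto (fun j => ∫ y, G x y ∂(ν j)) atTop (𝓝 (∫ y, G x y ∂μ)) := by
    intro x
    have := hw (mkC0 (fun y => G x y) (hGyc x) (hGyhcs x))
    simpa using this
  -- main estimate
  rw [Metric.tendsto_nhds]
  intro ε hε
  have hden : (0:ℝ) < 2 * (2 * Cr + 1) * (Cr + 1) := by positivity
  set ε1 : ℝ := ε / (2 * (2 * Cr + 1) * (Cr + 1)) with hε1def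
  have hε1 : 0 < ε1 := div_pos hε hden
  obtain ⟨δ, hδ, hδp⟩ := Metric.uniformContinuous_iff.mp hUC ε1 hε1
  -- finite subcover of K by δ-balls
  obtain ⟨t, ht⟩ := hK.elim_finite_subcover (fun p : E3 => ball p δ)
    (fun p => isOpen_ball) (fun x hx => Set.mem_iUnion.mpr ⟨x, mem_ball_self hδ⟩)
  -- eventual closeness at the centers
  have Event1 : ∀ᶠ j in atTop, ∀ p ∈ t, |(∫ y, G p y ∂(ν j)) - ∫ y, G p y ∂μ| < ε1 := by
    rw [Filter.eventually_all_finset]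
    intro p _
    have := Metric.tendsto_nhds.mp (hFj p) ε1 hε1
    simpa [Real.dist_eq] using this
  have Event2 : ∀ᶠ j in atTop,
      dist (∫ x, (∫ y, G x y ∂μ) ∂(ν j)) (∫ x, (∫ y, G x y ∂μ) ∂μ) < ε / 2 := by
    have := hw (mkC0 (fun x => ∫ y, G x y ∂μ) hFμc hFμhcs)
    simp only [mkC0_apply] at this
    exact Metric.tendsto_nhds.mp this (ε/2) (half_pos hε)
  filter_upwards [Event1, Event2] with j h1 h2
  -- uniform bound on |F_j - F_μ|
  have key : ∀ x : E3, |(∫ y, G x y ∂(ν j)) - ∫ y, G x y ∂μ| ≤ ε1 * (2 * Cr + 1) := by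
    intro x
    by_cases hx : x ∈ K
    · obtain ⟨p, hpt, hpx⟩ : ∃ p ∈ t, x ∈ ball p δ := by
        have := ht hx
        simpa using this
      have hGdiff : ∀ (ρ : Measure E3) [IsFiniteMeasure ρ],
          |(∫ y, G x y ∂ρ) - ∫ y, G p y ∂ρ| ≤ ε1 * (ρ Set.univ).toReal := by
        intro ρ _
        rw [← integral_sub (intG ρ G hGc hG0 B hGB x) (intG ρ G hGc hG0 B hGB p)]
        have := norm_integral_le_of_norm_le_const (μ := ρ)
          (f := fun y => G x y - G p y) (C := ε1) ?_
        · simpa [Real.norm_eq_abs, measureReal_def] using this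
        · apply Filter.Eventually.of_forall
          intro y
          have hd : dist ((x, y) : E3 × E3) ((p, y) : E3 × E3) < δ := by
            rw [Prod.dist_eq]
            simp only [dist_self]
            rw [max_eq_left dist_nonneg]
            exact mem_ball.mp hpx
          have := hδp hd
          rw [Real.dist_eq] at this
          rw [Real.norm_eq_abs]
          exact le_of_lt this
      have h1' := h1 p hpt
      have hj := hGdiff (ν j)
      have hμ' := hGdiff μ
      have hjb : |(∫ y, G x y ∂(ν j)) - ∫ y, G p y ∂(ν j)| ≤ ε1 * Cr :=
        le_trans hj (by apply mul_le_mul_of_nonneg_left (hmass j) (le_of_lt hε1))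
      have hμb : |(∫ y, G x y ∂μ) - ∫ y, G p y ∂μ| ≤ ε1 * Cr :=
        le_trans hμ' (by apply mul_le_mul_of_nonneg_left hμmass (le_of_lt hε1))
      calc |(∫ y, G x y ∂(ν j)) - ∫ y, G x y ∂μ|
          ≤ |(∫ y, G x y ∂(ν j)) - ∫ y, G p y ∂(ν j)|
            + |(∫ y, G p y ∂(ν j)) - ∫ y, G p y ∂μ|
            + |(∫ y, G p y ∂μ) - ∫ y, G x y ∂μ| := by
            have := abs_sub_le ((∫ y, G x y ∂(ν j))) (∫ y, G p y ∂μ) (∫ y, G x y ∂μ)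
            have h2' := abs_sub_le ((∫ y, G x y ∂(ν j))) (∫ y, G p y ∂(ν j)) (∫ y, G p y ∂μ)
            linarith [abs_sub_le ((∫ y, G x y ∂(ν j))) (∫ y, G p y ∂(ν j)) (∫ y, G p y ∂μ),
              abs_sub_le ((∫ y, G x y ∂(ν j))) (∫ y, G p y ∂μ) (∫ y, G x y ∂μ)]
      _ ≤ ε1 * Cr + ε1 + ε1 * Cr := by
            refine add_le_add (add_le_add hjb (le_of_lt h1')) ?_
            rw [abs_sub_comm]; exact hμb
      _ = ε1 * (2 * Cr + 1) := by ring
    · have hxz : (∫ y, G x y ∂(ν j)) = 0 := by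
        have : (fun y => G x y) = fun _ => 0 := funext fun y => hKx x y hx
        rw [this, integral_zero]
      rw [hxz, hFμ0 x hx, sub_zero, abs_zero]
      positivity
  -- put together
  have hFμint : Integrable (fun x => ∫ y, G x y ∂μ) (ν j) := by
    refine Integrable.mono' (integrable_const (B * (μ Set.univ).toReal))
      hFμc.aestronglyMeasurable (Filter.Eventually.of_forall fun x => ?_)
    rw [Real.norm_eq_abs, abs_of_nonneg (F_nonneg μ G hGc hG0 B hGB x)]
    exact F_le μ G hGc hG0 B hGB x
  have hsplit : |(∫ x, (∫ y, G x y ∂(ν j)) ∂(ν j)) - ∫ x, (∫ y, G x y ∂μ) ∂(ν j)|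
      ≤ ε1 * (2 * Cr + 1) * Cr := by
    rw [← integral_sub (intF (ν j) G hGc hG0 B hGB) hFμint]
    have := norm_integral_le_of_norm_le_const (μ := ν j)
      (f := fun x => (∫ y, G x y ∂(ν j)) - ∫ y, G x y ∂μ) (C := ε1 * (2 * Cr + 1))
      (Filter.Eventually.of_forall fun x => by rw [Real.norm_eq_abs]; exact key x)
    rw [Real.norm_eq_abs] at this
    refine le_trans this ?_
    apply mul_le_mul_of_nonneg_left (hmass j)
    positivity
  have hεle : ε1 * (2 * Cr + 1) * Cr < ε / 2 := by
    rw [hε1def]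
    rw [div_mul_eq_mul_div, div_mul_eq_mul_div, div_lt_iff₀ hden]
    have hlt : (2 * Cr + 1) * Cr < (2 * Cr + 1) * (Cr + 1) := by nlinarith
    calc ε * (2 * Cr + 1) * Cr = ε * ((2 * Cr + 1) * Cr) := by ring
    _ < ε * ((2 * Cr + 1) * (Cr + 1)) := by
        apply mul_lt_mul_of_pos_left hlt hε
    _ = ε / 2 * (2 * (2 * Cr + 1) * (Cr + 1)) := by ring
  rw [Real.dist_eq]
  calc |(∫ x, (∫ y, G x y ∂(ν j)) ∂(ν j)) - ∫ x, (∫ y, G x y ∂μ) ∂μ|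
      ≤ |(∫ x, (∫ y, G x y ∂(ν j)) ∂(ν j)) - ∫ x, (∫ y, G x y ∂μ) ∂(ν j)|
        + |(∫ x, (∫ y, G x y ∂μ) ∂(ν j)) - ∫ x, (∫ y, G x y ∂μ) ∂μ| :=
        abs_sub_le _ _ _
  _ < ε1 * (2 * Cr + 1) * Cr + ε / 2 := by
        apply add_lt_add_of_le_of_lt hsplit
        rw [Real.dist_eq] at h2; exact h2
  _ < ε := by linarith

/-- offDiagEnergy and selfEnergy agree (the Coulomb kernel already vanishes on the
diagonal thanks to `(0 : ℝ)⁻¹ = 0`). -/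
lemma offDiag_eq_self (μ : Measure E3) : offDiagEnergy μ = selfEnergy μ := by
  unfold offDiagEnergy selfEnergy coulombPair
  congr 1
  refine lintegral_congr fun x => lintegral_congr fun y => ?_
  by_cases h : x = y
  · subst h; simp [dist_self]
  · simp [h]

lemma lintegral_empirical (Z : ℝ) (N : ℕ) (x : Fin N → E3) (f : E3 → ℝ≥0∞) :
    ∫⁻ y, f y ∂(empirical Z N x) = (ENNReal.ofReal Z)⁻¹ * ∑ i, f (x i) := by
  rw [empirical, lintegral_smul_measure, lintegral_finset_sum_measure]
  congr 1
  exact Finset.sum_congr rfl fun i _ => lintegral_dirac _ f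

lemma empirical_mass {Z : ℝ} (hZ : 0 < Z) (N : ℕ) (x : Fin N → E3) :
    empirical Z N x Set.univ = ENNReal.ofReal ((N : ℝ) / Z) := by
  have h1 : empirical Z N x Set.univ = ∫⁻ y, 1 ∂(empirical Z N x) := (lintegral_one).symm
  rw [h1, lintegral_empirical]
  simp only [Finset.sum_const, Finset.card_univ, Fintype.card_fin, nsmul_eq_mul, mul_one]
  rw [ENNReal.ofReal_div_of_pos hZ, ENNReal.div_eq_inv_mul, ENNReal.ofReal_natCast]

lemma empirical_singleton {Z : ℝ} (hZ : 0 < Z) {N : ℕ} {x : Fin N → E3}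
    (hinj : Function.Injective x) (i : Fin N) :
    empirical Z N x {x i} = (ENNReal.ofReal Z)⁻¹ := by
  rw [empirical, Measure.smul_apply, smul_eq_mul]
  have : (∑ i', Measure.dirac (x i')) {x i} = ∑ i', Measure.dirac (x i') {x i} := by
    rw [Measure.coe_finset_sum]; simp
  rw [this]
  have h2 : ∀ i', Measure.dirac (x i') {x i} = if i' = i then 1 else 0 := by
    intro i'
    rw [Measure.dirac_apply]
    by_cases h : i' = i
    · subst h; simp
    · have : x i' ∉ ({x i} : Set E3) := by
        simp only [Set.mem_singleton_iff]
        exact fun hc => h (hinj hc)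
      simp [h, Set.indicator_of_notMem this]
  simp only [h2]
  simp

lemma empirical_diag {Z : ℝ} (hZ : 0 < Z) {N : ℕ} {x : Fin N → E3}
    (hinj : Function.Injective x) :
    ∫⁻ p, (empirical Z N x) {p} ∂(empirical Z N x)
      = (ENNReal.ofReal Z)⁻¹ * ((ENNReal.ofReal Z)⁻¹ * N) := by
  rw [lintegral_empirical]
  congr 1
  have : ∀ i : Fin N, empirical Z N x {x i} = (ENNReal.ofReal Z)⁻¹ :=
    fun i => empirical_singleton hZ hinj i
  simp only [this]
  simp [mul_comm]

section attr
variable (M : ℕ) (R : Fin M → E3) (d : ℝ)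

/-- regularised attraction potential -/
def attrPot (z : Fin M → ℝ) (x : E3) : ℝ := ∑ α, z α * (max d (dist x (R α)))⁻¹

lemma attrPot_continuous (z : Fin M → ℝ) (hd : 0 < d) : Continuous (attrPot M R d z) := by
  apply continuous_finset_sum
  intro α _
  apply continuous_const.mul
  apply Continuous.inv₀
  · exact continuous_const.max (Continuous.dist continuous_id continuous_const)
  · intro x; exact ne_of_gt (lt_max_of_lt_left hd)

lemma attrPot_zero_at_infty (z : Fin M → ℝ) (hd : 0 < d) :
    Tendsto (attrPot M R d z) (cocompact E3) (𝓝 0) := by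
  have h0 : (0:ℝ) = ∑ α : Fin M, 0 := by simp
  rw [h0]
  apply tendsto_finset_sum
  intro α _
  rw [show (0:ℝ) = z α * 0 by ring]
  apply Filter.Tendsto.const_mul
  apply Filter.Tendsto.inv_tendsto_atTop
  apply tendsto_atTop_mono (fun x => le_max_right d (dist x (R α)))
  exact tendsto_dist_right_cocompact_atTop (R α)

def attrC0 (z : Fin M → ℝ) (hd : 0 < d) : ZeroAtInftyContinuousMap E3 ℝ :=
  ⟨⟨attrPot M R d z, attrPot_continuous M R d z hd⟩, attrPot_zero_at_infty M R d z hd⟩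

lemma ae_mem_hcc (μ : Measure E3) (hsupp : μ (hardCoreComp M R d)ᶜ = 0) :
    ∀ᵐ x ∂μ, x ∈ hardCoreComp M R d := by
  rw [ae_iff]
  convert hsupp using 2
  rfl

lemma attraction_eq (z : Fin M → ℝ) (μ : Measure E3)
    (hsupp : μ (hardCoreComp M R d)ᶜ = 0) :
    attraction M R z μ = ∫ x, attrPot M R d z x ∂μ := by
  apply integral_congr_ae
  filter_upwards [ae_mem_hcc M R d μ hsupp] with x hx
  apply Finset.sum_congr rfl
  intro α _
  have hge : d ≤ dist x (R α) := hx α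
  rw [max_eq_right hge, div_eq_mul_inv]

lemma attraction_integrand_meas (z : Fin M → ℝ) :
    Measurable fun x : E3 => ∑ α, z α / dist x (R α) := by
  apply Finset.measurable_sum
  intro α _
  simp only [div_eq_mul_inv]
  exact measurable_const.mul (Measurable.inv (measurable_id.dist measurable_const))

lemma attraction_integrable (hd : 0 < d) (z : Fin M → ℝ) (μ : Measure E3) [IsFiniteMeasure μ]
    (hsupp : μ (hardCoreComp M R d)ᶜ = 0) :
    Integrable (fun x => ∑ α, z α / dist x (R α)) μ := by
  refine Integrable.mono' (integrable_const ((∑ α, |z α|) / d)) ?_ ?_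
  · exact (attraction_integrand_meas M R z).aestronglyMeasurable
  · filter_upwards [ae_mem_hcc M R d μ hsupp] with x hx
    rw [Real.norm_eq_abs]
    calc |∑ α, z α / dist x (R α)| ≤ ∑ α, |z α / dist x (R α)| := Finset.abs_sum_le_sum_abs _ _
    _ ≤ ∑ α, |z α| / d := by
        apply Finset.sum_le_sum
        intro α _
        rw [abs_div, abs_of_nonneg (dist_nonneg)]
        apply div_le_div_of_nonneg_left (abs_nonneg _) hd (hx α)
    _ = (∑ α, |z α|) / d := by rw [Finset.sum_div]

lemma attraction_bound (hd : 0 < d) (z : Fin M → ℝ) (μ : Measure E3) [IsFiniteMeasure μ]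
    (hsupp : μ (hardCoreComp M R d)ᶜ = 0) :
    |attraction M R z μ| ≤ (∑ α, |z α|) / d * (μ Set.univ).toReal := by
  rw [attraction]
  have := norm_integral_le_of_norm_le_const (μ := μ)
    (f := fun x => ∑ α, z α / dist x (R α)) (C := (∑ α, |z α|) / d) ?_
  · simpa [Real.norm_eq_abs, measureReal_def] using this
  · filter_upwards [ae_mem_hcc M R d μ hsupp] with x hx
    rw [Real.norm_eq_abs]
    calc |∑ α, z α / dist x (R α)| ≤ ∑ α, |z α / dist x (R α)| := Finset.abs_sum_le_sum_abs _ _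
    _ ≤ ∑ α, |z α| / d := by
        apply Finset.sum_le_sum
        intro α _
        rw [abs_div, abs_of_nonneg (dist_nonneg)]
        apply div_le_div_of_nonneg_left (abs_nonneg _) hd (hx α)
    _ = (∑ α, |z α|) / d := by rw [Finset.sum_div]

lemma attraction_sub (hd : 0 < d) (z w : Fin M → ℝ) (μ : Measure E3) [IsFiniteMeasure μ]
    (hsupp : μ (hardCoreComp M R d)ᶜ = 0) :
    attraction M R z μ - attraction M R w μ = attraction M R (z - w) μ := by
  unfold attraction
  rw [← integral_sub (attraction_integrable M R d hd z μ hsupp)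
    (attraction_integrable M R d hd w μ hsupp)]
  congr 1
  funext x
  rw [← Finset.sum_sub_distrib]
  apply Finset.sum_congr rfl
  intro α _
  rw [Pi.sub_apply, sub_div]
end attr

/-- mass bound via cutoffs -/
lemma mass_le_of_cutoff (μ : Measure E3) [IsFiniteMeasure μ] (lam' : ℝ) (hlam' : 0 ≤ lam')
    (h : ∀ m : ℕ, ∫ x, cutoff m x ∂μ ≤ lam') : μ Set.univ ≤ ENNReal.ofReal lam' := by
  have h1 : μ Set.univ = ∫⁻ x, 1 ∂μ := lintegral_one.symm
  have hsup : ∀ x : E3, (⨆ m, ENNReal.ofReal (cutoff m x)) = 1 := by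
    intro x
    apply le_antisymm
    · exact iSup_le fun m => by
        calc ENNReal.ofReal (cutoff m x) ≤ ENNReal.ofReal 1 :=
          ENNReal.ofReal_le_ofReal (cutoff_le_one m x)
        _ = 1 := ENNReal.ofReal_one
    · obtain ⟨m, hm⟩ := exists_nat_ge (‖x‖ + 1)
      refine le_trans ?_ (le_iSup _ m)
      rw [cutoff_eq_one hm, ENNReal.ofReal_one]
  rw [h1]
  have h2 : ∫⁻ x, 1 ∂μ = ⨆ m, ∫⁻ x, ENNReal.ofReal (cutoff m x) ∂μ := by
    rw [← lintegral_iSup]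
    · exact lintegral_congr fun x => (hsup x).symm
    · exact fun m => (cutoff_continuous m).measurable.ennreal_ofReal
    · exact fun a b hab x => ENNReal.ofReal_le_ofReal (cutoff_mono x hab)
  rw [h2]
  apply iSup_le
  intro m
  have hint : Integrable (cutoff m) μ := by
    refine Integrable.mono' (integrable_const 1) (cutoff_continuous m).aestronglyMeasurable
      (Filter.Eventually.of_forall fun x => ?_)
    rw [Real.norm_eq_abs, abs_of_nonneg (cutoff_nonneg m x)]
    exact cutoff_le_one m x
  rw [← ofReal_integral_eq_lintegral_ofReal hint
    (Filter.Eventually.of_forall (cutoff_nonneg m))]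
  exact ENNReal.ofReal_le_ofReal (h m)

/-- real-analysis helper -/
lemma le_of_frequently_le_tendsto {a lam : ℝ} {u v : ℕ → ℝ}
    (hu : Tendsto u atTop (𝓝 a)) (hv : Tendsto v atTop (𝓝 lam))
    (h : ∃ᶠ j in atTop, u j ≤ v j) : a ≤ lam := by
  by_contra hc
  push_neg at hc
  set ε := (a - lam) / 2 with hε
  have hε0 : 0 < ε := by simp [hε]; linarith
  have e1 : ∀ᶠ j in atTop, a - ε < u j := by
    have := Metric.tendsto_nhds.mp hu ε hε0
    filter_upwards [this] with j hj
    rw [Real.dist_eq, abs_lt] at hj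
    linarith [hj.1]
  have e2 : ∀ᶠ j in atTop, v j < lam + ε := by
    have := Metric.tendsto_nhds.mp hv ε hε0
    filter_upwards [this] with j hj
    rw [Real.dist_eq, abs_lt] at hj
    linarith [hj.2]
  obtain ⟨j, h1, h2, h3⟩ := (h.and_eventually (e1.and e2)).exists
  have : a - ε = lam + ε := by rw [hε]; ring
  linarith



/-- EReal helper: an `ℝ≥0∞` minus a real is never `⊥`. -/
lemma bot_lt_esub (a : ℝ≥0∞) (r : ℝ) : (⊥ : EReal) < (a : EReal) - (r : EReal) := by
  by_cases ha : a = ⊤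
  · rw [ha, EReal.coe_ennreal_top, EReal.top_sub_coe]
    exact bot_lt_top
  · rw [← ENNReal.ofReal_toReal ha, EReal.coe_ennreal_ofReal, ← EReal.coe_sub]
    exact EReal.bot_lt_coe _

@[simp] lemma attrC0_apply (M : ℕ) (R : Fin M → E3) (d : ℝ) (z : Fin M → ℝ) (hd : 0 < d)
    (x : E3) : attrC0 M R d z hd x = attrPot M R d z x := rfl

/-- Gamma-convergence, lower bound: if `μ_j ⇀* μ` then
`I_λ(μ) ≤ liminf_j I^{(j)}(μ_j)`, where `I^{(j)}` is the rescaled discrete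
energy and `I_λ(μ) = I(μ)` if `μ(ℝ³∖Ω) ≤ λ`, `+∞` otherwise. -/
theorem gamma_lower_bound
    (M : ℕ) (hM : 1 ≤ M) (R : Fin M → E3) (hR : Function.Injective R)
    (d : ℝ) (hd : 0 < d)
    (hsep : ∀ α β, α ≠ β → 2 * d < dist (R α) (R β))
    (z : Fin M → ℝ) (hz0 : ∀ α, 0 ≤ z α)
    (N : ℕ → ℕ) (hN : Tendsto N atTop atTop)
    (Zc : ℕ → Fin M → ℝ) (hZc : ∀ j α, 0 < Zc j α)
    (hZ : Tendsto (fun j => ∑ α, Zc j α) atTop atTop)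
    (lam : ℝ) (hlam : 0 < lam)
    (hNZ : Tendsto (fun j => (N j : ℝ) / ∑ α, Zc j α) atTop (𝓝 lam))
    (hzlim : ∀ α, Tendsto (fun j => Zc j α / ∑ β, Zc j β) atTop (𝓝 (z α)))
    (μs : ℕ → Measure E3) (μ : Measure E3)
    (hfin : ∀ j, IsFiniteMeasure (μs j)) (hμfin : IsFiniteMeasure μ)
    (hsupp : ∀ j, μs j (hardCoreComp M R d)ᶜ = 0)
    (hμsupp : μ (hardCoreComp M R d)ᶜ = 0)
    (hconv : weakStarTendsto μs μ) :
    (if μ Set.univ ≤ ENNReal.ofReal lam then contEnergy M R z μ else (⊤ : EReal))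
      ≤ Filter.liminf (fun j => discEnergy M (N j) R (Zc j) d (μs j)) atTop := by
  classical
  haveI := hμfin
  haveI : ∀ j, IsFiniteMeasure (μs j) := hfin
  -- notation
  have hZspos : ∀ j, 0 < ∑ α, Zc j α := by
    intro j
    haveI : Nonempty (Fin M) := ⟨⟨0, hM⟩⟩
    exact Finset.sum_pos (fun α _ => hZc j α) Finset.univ_nonempty
  by_cases hE : ∀ᶠ j in atTop, ¬ (∃ x : Fin (N j) → E3, Function.Injective x ∧
      (∀ i, x i ∈ hardCoreComp M R d) ∧ μs j = empirical (∑ α, Zc j α) (N j) x)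
  · -- eventually not an empirical measure: liminf is ⊤
    have hlim : Filter.liminf (fun j => discEnergy M (N j) R (Zc j) d (μs j)) atTop = ⊤ := by
      have hev : ∀ᶠ j in atTop, discEnergy M (N j) R (Zc j) d (μs j) = (⊤ : EReal) :=
        hE.mono fun j hj => by rw [discEnergy, if_neg hj]
      rw [liminf_congr hev, liminf_const]
    rw [hlim]
    exact le_top
  · rw [Filter.not_eventually] at hE
    simp only [not_not] at hE
    -- mass of empirical measures
    have hmass_emp : ∀ j, (∃ x : Fin (N j) → E3, Function.Injective x ∧
        (∀ i, x i ∈ hardCoreComp M R d) ∧ μs j = empirical (∑ α, Zc j α) (N j) x) →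
        μs j Set.univ = ENNReal.ofReal ((N j : ℝ) / ∑ α, Zc j α) := by
      rintro j ⟨x, hinj, hmem, heq⟩
      rw [heq, empirical_mass (hZspos j)]
    have hmassr_nonneg : ∀ j, 0 ≤ (N j : ℝ) / ∑ α, Zc j α :=
      fun j => div_nonneg (Nat.cast_nonneg _) (le_of_lt (hZspos j))
    -- Claim A: the limit has mass at most lam
    have hmassμ : μ Set.univ ≤ ENNReal.ofReal lam := by
      apply mass_le_of_cutoff μ lam (le_of_lt hlam)
      intro m
      have hcc : Tendsto (fun j => ∫ x, cutoff m x ∂(μs j)) atTop (𝓝 (∫ x, cutoff m x ∂μ)) := by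
        simpa using hconv (mkC0 (cutoff m) (cutoff_continuous m) (cutoff_hcs m))
      apply le_of_frequently_le_tendsto hcc hNZ
      apply hE.mono
      intro j hj
      have h1 : ∫ x, cutoff m x ∂(μs j) ≤ 1 * ((μs j) Set.univ).toReal := by
        have := norm_integral_le_of_norm_le_const (μ := μs j) (f := cutoff m) (C := 1)
          (Filter.Eventually.of_forall fun x => by
            rw [Real.norm_eq_abs, abs_of_nonneg (cutoff_nonneg m x)]
            exact cutoff_le_one m x)
        calc ∫ x, cutoff m x ∂(μs j) ≤ ‖∫ x, cutoff m x ∂(μs j)‖ := le_abs_self _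
        _ ≤ _ := this
      rw [one_mul, hmass_emp j hj, ENNReal.toReal_ofReal (hmassr_nonneg j)] at h1
      exact h1
    rw [if_pos hmassμ]
    -- lower-bound the liminf
    rw [le_liminf_iff]
    intro b hb
    induction b with
    | bot =>
      apply Filter.Eventually.of_forall
      intro j
      rw [discEnergy]
      split
      · exact bot_lt_esub _ _
      · exact bot_lt_top
    | top => exact absurd hb not_top_lt
    | coe r =>
      rw [contEnergy] at hb
      -- nonnegativity and ENNReal↔ℝ conversion of truncated energies of μ
      have hQm_nonneg : ∀ n : ℕ, 0 ≤ ∫ x, (∫ y, hker n x y ∂μ) ∂μ := fun n =>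
        integral_nonneg fun x => integral_nonneg fun y => hker_nonneg n x y
      have hHeq : ∀ n : ℕ, ∫⁻ x, ∫⁻ y, ENNReal.ofReal (hker n x y) ∂μ ∂μ
          = ENNReal.ofReal (∫ x, (∫ y, hker n x y ∂μ) ∂μ) := fun n =>
        double_ofReal μ (hker n) (hker_continuous n) (hker_nonneg n) ((n:ℝ)+1) (hker_le n)
      have hSle : selfEnergy μ
          ≤ (1/2) * ⨆ n : ℕ, ENNReal.ofReal (∫ x, (∫ y, hker n x y ∂μ) ∂μ) := by
        rw [selfEnergy]
        apply mul_le_mul_right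
        calc coulombPair μ μ
            ≤ ⨆ n : ℕ, ∫⁻ x, ∫⁻ y, ENNReal.ofReal (hker n x y) ∂μ ∂μ := coulomb_le_sup μ
        _ = _ := iSup_congr hHeq
      -- choose a truncation level n and a gap ε
      obtain ⟨n, ε, hε, hrn⟩ : ∃ (n : ℕ) (ε : ℝ), 0 < ε ∧
          r < (∫ x, (∫ y, hker n x y ∂μ) ∂μ) / 2 - attraction M R z μ - 4 * ε := by
        by_cases ht : 0 ≤ r + attraction M R z μ
        · have hb' : ((r + attraction M R z μ : ℝ) : EReal) < (selfEnergy μ : EReal) := by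
            rw [EReal.coe_add]
            exact (EReal.lt_sub_iff_add_lt (Or.inl (EReal.coe_ne_bot _))
              (Or.inl (EReal.coe_ne_top _))).mp hb
          have h2 : ENNReal.ofReal (r + attraction M R z μ) < selfEnergy μ := by
            rw [← EReal.coe_ennreal_lt_coe_ennreal_iff, EReal.coe_ennreal_ofReal,
              max_eq_left ht]
            exact hb'
          have h3 := lt_of_lt_of_le h2 hSle
          have h5 : ∀ Y : ℝ≥0∞, (2:ℝ≥0∞) * ((1/2) * Y) = Y := by
            intro Y
            rw [← mul_assoc, one_div, ENNReal.mul_inv_cancel two_ne_zero ENNReal.ofNat_ne_top,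
              one_mul]
          have h4 : ENNReal.ofReal (2 * (r + attraction M R z μ))
              < ⨆ m : ℕ, ENNReal.ofReal (∫ x, (∫ y, hker m x y ∂μ) ∂μ) := by
            have hmul := ENNReal.mul_lt_mul_right (a := 2) two_ne_zero ENNReal.ofNat_ne_top h3
            rw [h5] at hmul
            calc ENNReal.ofReal (2 * (r + attraction M R z μ))
                = 2 * ENNReal.ofReal (r + attraction M R z μ) := by
                  rw [ENNReal.ofReal_mul (by norm_num : (0:ℝ) ≤ 2), ENNReal.ofReal_ofNat]
            _ < _ := hmul
          obtain ⟨m, hm⟩ := lt_iSup_iff.mp h4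
          have h6 : 2 * (r + attraction M R z μ) < ∫ x, (∫ y, hker m x y ∂μ) ∂μ :=
            (ENNReal.ofReal_lt_ofReal_iff_of_nonneg (by linarith)).mp hm
          exact ⟨m, ((∫ x, (∫ y, hker m x y ∂μ) ∂μ) / 2 - (r + attraction M R z μ)) / 8,
            by linarith, by linarith⟩
        · push_neg at ht
          refine ⟨0, -(r + attraction M R z μ) / 8, by linarith, ?_⟩
          have := hQm_nonneg 0
          linarith
      -- the modified sequence of measures
      set νs : ℕ → Measure E3 := fun j =>
        if μs j Set.univ ≤ ENNReal.ofReal (lam + 1) then μs j else μ with hνdef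
      have hνcase : ∀ j, νs j = μs j ∨ νs j = μ := by
        intro j; rw [hνdef]; dsimp only; split
        exacts [Or.inl rfl, Or.inr rfl]
      have hνfin : ∀ j, IsFiniteMeasure (νs j) := by
        intro j; rcases hνcase j with h | h <;> rw [h]
        · exact hfin j
        · exact hμfin
      have hνsupp : ∀ j, νs j (hardCoreComp M R d)ᶜ = 0 := by
        intro j; rcases hνcase j with h | h <;> rw [h]
        · exact hsupp j
        · exact hμsupp
      have hνuniv : ∀ j, νs j Set.univ ≤ ENNReal.ofReal (lam+1) ∨ νs j = μ := by
        intro j; rw [hνdef]; dsimp only; split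
        · exact Or.inl (by assumption)
        · exact Or.inr rfl
      have hCb0 : (0:ℝ) ≤ (lam + 1) + (μ Set.univ).toReal := by positivity
      have hCbν : ∀ j, ((νs j) Set.univ).toReal ≤ (lam + 1) + (μ Set.univ).toReal := by
        intro j
        rcases hνuniv j with h | h
        · have h1 := ENNReal.toReal_mono ENNReal.ofReal_ne_top h
          rw [ENNReal.toReal_ofReal (by linarith)] at h1
          have h2 : (0:ℝ) ≤ (μ Set.univ).toReal := ENNReal.toReal_nonneg
          linarith
        · rw [h]; linarith
      have hCbμ : (μ Set.univ).toReal ≤ (lam + 1) + (μ Set.univ).toReal := by linarith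
      have hw' : ∀ g : ZeroAtInftyContinuousMap E3 ℝ,
          Tendsto (fun j => ∫ x, g x ∂(νs j)) atTop (𝓝 (∫ x, g x ∂μ)) := by
        intro g
        rw [tendsto_iff_dist_tendsto_zero]
        refine squeeze_zero (fun j => dist_nonneg) (fun j => ?_)
          (tendsto_iff_dist_tendsto_zero.mp (hconv g))
        rcases hνcase j with h | h <;> rw [h]
        rw [dist_self]
        exact dist_nonneg
      -- convergence of truncated energies
      have hKx : ∀ x y : E3, x ∉ closedBall (0:E3) n → hker n x y = 0 := by
        intro x y hx
        rw [hker, cutoff_zero hx]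
        ring
      have hKy : ∀ x y : E3, y ∉ closedBall (0:E3) n → hker n x y = 0 := by
        intro x y hy
        rw [hker, cutoff_zero hy]
        ring
      have hQconv := key_conv νs μ hνfin ((lam + 1) + (μ Set.univ).toReal) hCb0 hCbν hCbμ hw'
        (hker n) (hker_continuous n) (hker_nonneg n) ((n:ℝ)+1) (hker_le n)
        (closedBall 0 n) (isCompact_closedBall _ _) hKx hKy
      have EventQ : ∀ᶠ j in atTop,
          |(∫ x, (∫ y, hker n x y ∂(νs j)) ∂(νs j)) - ∫ x, (∫ y, hker n x y ∂μ) ∂μ| < ε := by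
        have := Metric.tendsto_nhds.mp hQconv ε hε
        simpa [Real.dist_eq] using this
      have EventM : ∀ᶠ j in atTop, (N j : ℝ) / ∑ α, Zc j α ≤ lam + 1 := by
        filter_upwards [Metric.tendsto_nhds.mp hNZ 1 one_pos] with j hj
        rw [Real.dist_eq, abs_lt] at hj
        linarith [hj.2]
      have hD0 : Tendsto (fun j => ((n:ℝ)+1) * (((N j : ℝ) / ∑ α, Zc j α) * (∑ α, Zc j α)⁻¹))
          atTop (𝓝 0) := by
        have h1 : Tendsto (fun j => (∑ α, Zc j α)⁻¹) atTop (𝓝 (0:ℝ)) :=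
          tendsto_inv_atTop_zero.comp hZ
        have h2 := hNZ.mul h1
        rw [mul_zero] at h2
        have h3 := h2.const_mul ((n:ℝ)+1)
        rw [mul_zero] at h3
        exact h3
      have EventD : ∀ᶠ j in atTop,
          ENNReal.ofReal (((n:ℝ)+1) * (((N j : ℝ) / ∑ α, Zc j α) * (∑ α, Zc j α)⁻¹))
            ≤ ENNReal.ofReal ε := by
        filter_upwards [Metric.tendsto_nhds.mp hD0 ε hε] with j hj
        rw [Real.dist_eq, sub_zero, abs_lt] at hj
        exact ENNReal.ofReal_le_ofReal (le_of_lt hj.2)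
      have hzsum0 : Tendsto (fun j => ∑ α, |Zc j α / ∑ β, Zc j β - z α|) atTop (𝓝 0) := by
        have h0 : (0:ℝ) = ∑ _α : Fin M, (0:ℝ) := by simp
        rw [h0]
        apply tendsto_finset_sum
        intro α _
        have h1 := ((hzlim α).sub (tendsto_const_nhds (x := z α))).abs
        simpa using h1
      have EventA1 : ∀ᶠ j in atTop,
          (∑ α, |Zc j α / ∑ β, Zc j β - z α|) / d * (lam + 1) < ε/2 := by
        have hc : Tendsto (fun j => (∑ α, |Zc j α / ∑ β, Zc j β - z α|) / d * (lam + 1))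
            atTop (𝓝 0) := by
          have h1 := (hzsum0.div_const d).mul_const (lam + 1)
          simpa using h1
        filter_upwards [Metric.tendsto_nhds.mp hc (ε/2) (half_pos hε)] with j hj
        rw [Real.dist_eq, sub_zero] at hj
        exact lt_of_le_of_lt (le_abs_self _) hj
      have EventA2 : ∀ᶠ j in atTop,
          |(∫ x, attrPot M R d z x ∂(νs j)) - ∫ x, attrPot M R d z x ∂μ| < ε/2 := by
        have := Metric.tendsto_nhds.mp (hw' (attrC0 M R d z hd)) (ε/2) (half_pos hε)
        simpa [Real.dist_eq, attrC0_apply] using this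
      -- conclusion
      filter_upwards [EventQ, EventM, EventD, EventA1, EventA2] with j hQ hM1 hDj hA1 hA2
      by_cases hemp : ∃ x : Fin (N j) → E3, Function.Injective x ∧
          (∀ i, x i ∈ hardCoreComp M R d) ∧ μs j = empirical (∑ α, Zc j α) (N j) x
      · obtain ⟨x, hinj, hmem, heqx⟩ := hemp
        have hgood : μs j Set.univ ≤ ENNReal.ofReal (lam + 1) := by
          rw [hmass_emp j ⟨x, hinj, hmem, heqx⟩]
          exact ENNReal.ofReal_le_ofReal hM1
        have hνeq : νs j = μs j := by rw [hνdef]; dsimp only; rw [if_pos hgood]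
        rw [hνeq] at hQ
        -- attraction bound
        have hAj : attraction M R (fun α => Zc j α / ∑ β, Zc j β) (μs j)
            < attraction M R z μ + ε := by
          have hsub := attraction_sub M R d hd (fun α => Zc j α / ∑ β, Zc j β) z (μs j)
            (hsupp j)
          have hbd := attraction_bound M R d hd ((fun α => Zc j α / ∑ β, Zc j β) - z) (μs j)
            (hsupp j)
          have hmassj : ((μs j) Set.univ).toReal = (N j : ℝ) / ∑ α, Zc j α := by
            rw [hmass_emp j ⟨x, hinj, hmem, heqx⟩, ENNReal.toReal_ofReal (hmassr_nonneg j)]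
          rw [hmassj] at hbd
          have hsum_eq : (∑ α, |((fun α => Zc j α / ∑ β, Zc j β) - z) α|)
              = ∑ α, |Zc j α / ∑ β, Zc j β - z α| := by
            apply Finset.sum_congr rfl
            intro α _
            rw [Pi.sub_apply]
          rw [hsum_eq] at hbd
          have hsumnn : 0 ≤ (∑ α, |Zc j α / ∑ β, Zc j β - z α|) / d := by positivity
          have hstep : (∑ α, |Zc j α / ∑ β, Zc j β - z α|) / d * ((N j : ℝ) / ∑ α, Zc j α)
              ≤ (∑ α, |Zc j α / ∑ β, Zc j β - z α|) / d * (lam + 1) :=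
            mul_le_mul_of_nonneg_left hM1 hsumnn
          have habs : |attraction M R ((fun α => Zc j α / ∑ β, Zc j β) - z) (μs j)| < ε/2 :=
            lt_of_le_of_lt (le_trans hbd hstep) hA1
          have hAz : |attraction M R z (μs j) - attraction M R z μ| < ε/2 := by
            rw [attraction_eq M R d z (μs j) (hsupp j), attraction_eq M R d z μ hμsupp,
              ← hνeq]
            exact hA2
          have hdecomp : attraction M R (fun α => Zc j α / ∑ β, Zc j β) (μs j)
              = attraction M R z (μs j)
                + attraction M R ((fun α => Zc j α / ∑ β, Zc j β) - z) (μs j) := by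
            rw [← hsub]; ring
          rw [hdecomp]
          linarith [(abs_lt.mp habs).2, (abs_lt.mp hAz).2]
        -- self-energy lower bound
        have hHj : ∫⁻ x', ∫⁻ y', ENNReal.ofReal (hker n x' y') ∂(μs j) ∂(μs j)
            = ENNReal.ofReal (∫ x', (∫ y', hker n x' y' ∂(μs j)) ∂(μs j)) :=
          double_ofReal (μs j) (hker n) (hker_continuous n) (hker_nonneg n) ((n:ℝ)+1)
            (hker_le n)
        have hdle' : (∫⁻ x', ∫⁻ y', ENNReal.ofReal (hker n x' y') ∂(μs j) ∂(μs j))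
            ≤ coulombPair (μs j) (μs j) + ((n:ℝ≥0∞)+1) * ∫⁻ p, (μs j) {p} ∂(μs j) := by
          rw [coulombPair]
          exact hker_double_le (μs j) n
        have hDval : ∫⁻ p, (μs j) {p} ∂(μs j)
            = (ENNReal.ofReal (∑ α, Zc j α))⁻¹
              * ((ENNReal.ofReal (∑ α, Zc j α))⁻¹ * (N j)) := by
          rw [heqx]
          exact empirical_diag (hZspos j) hinj
        have hDreal : ((n:ℝ≥0∞)+1) * ∫⁻ p, (μs j) {p} ∂(μs j)
            = ENNReal.ofReal (((n:ℝ)+1) * (((N j : ℝ) / ∑ α, Zc j α) * (∑ α, Zc j α)⁻¹)) := by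
          have hsinv : (0:ℝ) ≤ (∑ α, Zc j α)⁻¹ := le_of_lt (inv_pos.mpr (hZspos j))
          rw [hDval, ← ENNReal.ofReal_inv_of_pos (hZspos j), ← ENNReal.ofReal_natCast (N j),
            ← ENNReal.ofReal_mul hsinv, ← ENNReal.ofReal_mul hsinv]
          have hn1 : ((n:ℝ≥0∞)+1) = ENNReal.ofReal ((n:ℝ)+1) := by
            rw [ENNReal.ofReal_add (by positivity) zero_le_one, ENNReal.ofReal_natCast,
              ENNReal.ofReal_one]
          rw [hn1, ← ENNReal.ofReal_mul (by positivity)]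
          congr 1
          rw [div_eq_mul_inv]
          ring
        have hchain : ENNReal.ofReal ((∫ x', (∫ y', hker n x' y' ∂μ) ∂μ) - 2*ε)
            ≤ coulombPair (μs j) (μs j) := by
          have h2 : ENNReal.ofReal ((∫ x', (∫ y', hker n x' y' ∂μ) ∂μ) - ε)
              ≤ coulombPair (μs j) (μs j) + ENNReal.ofReal ε := by
            calc ENNReal.ofReal ((∫ x', (∫ y', hker n x' y' ∂μ) ∂μ) - ε)
                ≤ ENNReal.ofReal (∫ x', (∫ y', hker n x' y' ∂(μs j)) ∂(μs j)) := by
                  apply ENNReal.ofReal_le_ofReal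
                  linarith [(abs_lt.mp hQ).1]
            _ = ∫⁻ x', ∫⁻ y', ENNReal.ofReal (hker n x' y') ∂(μs j) ∂(μs j) := hHj.symm
            _ ≤ coulombPair (μs j) (μs j) + ((n:ℝ≥0∞)+1) * ∫⁻ p, (μs j) {p} ∂(μs j) := hdle'
            _ ≤ coulombPair (μs j) (μs j) + ENNReal.ofReal ε := by
                apply add_le_add_right
                rw [hDreal]
                exact hDj
          rw [show (∫ x', (∫ y', hker n x' y' ∂μ) ∂μ) - 2*ε
              = ((∫ x', (∫ y', hker n x' y' ∂μ) ∂μ) - ε) - ε by ring,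
            ENNReal.ofReal_sub _ (le_of_lt hε)]
          exact tsub_le_iff_right.mpr h2
        have hself : ENNReal.ofReal (((∫ x', (∫ y', hker n x' y' ∂μ) ∂μ) - 2*ε)/2)
            ≤ selfEnergy (μs j) := by
          rw [selfEnergy]
          refine le_trans (le_of_eq ?_) (mul_le_mul_right hchain (1/2 : ℝ≥0∞))
          rw [div_eq_inv_mul, ENNReal.ofReal_mul (by norm_num : (0:ℝ) ≤ 2⁻¹),
            ENNReal.ofReal_inv_of_pos (by norm_num : (0:ℝ) < 2), ENNReal.ofReal_ofNat,
            one_div]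
        -- EReal conclusion
        rw [discEnergy, if_pos ⟨x, hinj, hmem, heqx⟩, offDiag_eq_self]
        have h1 : (((((∫ x', (∫ y', hker n x' y' ∂μ) ∂μ) - 2*ε)/2 : ℝ)) : EReal)
            ≤ ((selfEnergy (μs j) : ℝ≥0∞) : EReal) := by
          refine le_trans ?_ (EReal.coe_ennreal_le_coe_ennreal_iff.mpr hself)
          rw [EReal.coe_ennreal_ofReal]
          exact EReal.coe_le_coe_iff.mpr le_sup_left
        have h2 : ((attraction M R (fun α => Zc j α / ∑ β, Zc j β) (μs j) : ℝ) : EReal)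
            ≤ ((attraction M R z μ + ε : ℝ) : EReal) :=
          EReal.coe_le_coe_iff.mpr (le_of_lt hAj)
        have h3 := EReal.sub_le_sub h1 h2
        rw [← EReal.coe_sub] at h3
        refine lt_of_lt_of_le ?_ h3
        rw [EReal.coe_lt_coe_iff]
        linarith
      · rw [discEnergy, if_neg hemp]
        exact EReal.coe_lt_top r


end
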